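/- Let A ∈ ℝ^{n_s×n_s}, C ∈ ℝ^{n_o×n_s}, and let π be a residual feed-forward neural network with input dimension n_o, output dimension n_s, weights W^1, …, W^{L+2}, and activation σ with σ(0) = 0 that is sector bounded in [0, β_i] at every neuron (lower sector bounds α = 0). Form the isolation blocks N_{πx} = W^{L+2}C, N_{πw}, N_{ξx} (built from W^1C), N_{ξw}, and the matrices R_π, R_ξ, Ψ (with α = 0), M(λ), all with input pre-matrix T = C. Suppose Ã = A + W^{L+2}C is Hurwitz, Q ∈ ℝ^{n_s×n_s} is diagonal with positive diagonal entries q_1, …, q_{n_s}, and P = ∫₀^∞ e^{Ãᵀ t} Q e^{Ã t} dt. Suppose there exists λ ∈ ℝ^{n_σ} with λ_i > 0 for all i such that, with R₁ = diag(λ ∘ β) (∘ the Hadamard product), M₁ = −P N_{πw} − N_{ξx}ᵀ R₁ and M₂ = R₁ N_{ξw} + N_{ξw}ᵀ R₁: (i) ‖M₁‖_∞ < min_i q_i, and (ii) ‖M₁ᵀ‖_∞ + ‖M₂‖_∞ < 2 min_i λ_i. Then P is symmetric positive definite and R_πᵀ [[AᵀP + PA, P], [P, 0]] R_π + R_ξᵀ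 Ψᵀ M(λ) Ψ R_ξ is negative definite. -/

import Mathlib

open Matrix

/-- A residual feed-forward neural network with `Lm + 1` hidden layers,
input dimension `n₀`, output dimension `m`.  `hw l` is the width of hidden layer `l+1`
(0-based: hidden layers are indexed `0, …, Lm`).  `W l` is the weight matrix feeding
hidden layer `l`, `Wout` the output weight matrix `W^{L+1}` and `Wskip` the shortcut
connection weight matrix `W^{L+2}`. -/
structure ResNet (n₀ m : ℕ) where
  Lm : ℕ
  hw : ℕ → ℕ
  W : (l : ℕ) → Matrix (Fin (hw l)) (Fin (if l = 0 then n₀ else hw (l - 1))) ℝ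
  Wout : Matrix (Fin m) (Fin (hw Lm)) ℝ
  Wskip : Matrix (Fin m) (Fin n₀) ℝ

namespace ResNet

variable {n₀ m : ℕ}

/-- dimension of layer `l` (`l = 0` is the input layer, `l = 1, …, Lm+1` the hidden layers). -/
def dim (net : ResNet n₀ m) (l : ℕ) : ℕ := if l = 0 then n₀ else net.hw (l - 1)

/-- the forward pass through the hidden layers: `hfun σ net l x` is `h^l(x)`. -/
def hfun (σ : ℝ → ℝ) (net : ResNet n₀ m) : (l : ℕ) → (Fin n₀ → ℝ) → (Fin (net.dim l) → ℝ)
  | 0, x => x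
  | l + 1, x => fun i => σ ((net.W l).mulVec (hfun σ net l x) i)

/-- the output `π(x) = W^{L+1} h^L(x) + W^{L+2} x` of the residual network. -/
def apply (σ : ℝ → ℝ) (net : ResNet n₀ m) (x : Fin n₀ → ℝ) : Fin m → ℝ :=
  net.Wout.mulVec (hfun σ net (net.Lm + 1) x) + net.Wskip.mulVec x

/-- index type for the neurons (all hidden layers stacked). -/
abbrev NIdx (net : ResNet n₀ m) : Type := Σ l : Fin (net.Lm + 1), Fin (net.hw l)

/-- the first-layer weight matrix `W^1`. -/
def W1 (net : ResNet n₀ m) : Matrix (Fin (net.hw 0)) (Fin n₀) ℝ := net.W 0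

/-- the isolation block `N_{πw} = [0 ⋯ 0 W^{L+1}]`. -/
def Npiw (net : ResNet n₀ m) : Matrix (Fin m) net.NIdx ℝ :=
  Matrix.of fun i j =>
    if h : (j.1 : ℕ) = net.Lm then net.Wout i (Fin.cast (congrArg net.hw h) j.2) else 0

/-- the isolation block `N_{ξx} = [(W^1 T)ᵀ 0 ⋯ 0]ᵀ` for an input pre-matrix `T`. -/
def Nxix (net : ResNet n₀ m) {P : Type*} (T : Matrix (Fin n₀) P ℝ) :
    Matrix net.NIdx P ℝ :=
  Matrix.of fun j i =>
    if h : (j.1 : ℕ) = 0 then (net.W1 * T) (Fin.cast (congrArg net.hw h) j.2) i else 0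

/-- the isolation block `N_{ξw}` (block `(l, l-1)` is `W^l`). -/
def Nxiw (net : ResNet n₀ m) : Matrix net.NIdx net.NIdx ℝ :=
  Matrix.of fun i j =>
    if h : (j.1 : ℕ) + 1 = (i.1 : ℕ) then
      net.W i.1 i.2 (Fin.cast (by
        rw [if_neg (by omega : ¬ ((i.1 : ℕ)) = 0)]
        exact congrArg net.hw (by omega)) j.2)
    else 0

/-- the isolation matrix `R_π = [[I, 0], [N_{πx}, N_{πw}]]` with input pre-matrix `T`. -/
def Rpi (net : ResNet n₀ m) {P : Type*} [DecidableEq P]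
    (T : Matrix (Fin n₀) P ℝ) : Matrix (P ⊕ Fin m) (P ⊕ net.NIdx) ℝ :=
  Matrix.fromBlocks 1 0 (net.Wskip * T) net.Npiw

/-- the isolation matrix `R_ξ = [[N_{ξx}, N_{ξw}], [0, I]]` with input pre-matrix `T`. -/
def Rxi (net : ResNet n₀ m) {P : Type*}
    (T : Matrix (Fin n₀) P ℝ) : Matrix (net.NIdx ⊕ net.NIdx) (P ⊕ net.NIdx) ℝ :=
  Matrix.fromBlocks (net.Nxix T) net.Nxiw 0 1

end ResNet

/-- `Ψ = [[diag β, -I], [-diag α, I]]`. -/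
def Psi {I : Type*} [DecidableEq I] (a b : I → ℝ) : Matrix (I ⊕ I) (I ⊕ I) ℝ :=
  Matrix.fromBlocks (Matrix.diagonal b) (-1) (-(Matrix.diagonal a)) 1

/-- `M(λ) = [[0, diag λ], [diag λ, 0]]`. -/
def Mmat {I : Type*} [DecidableEq I] (lam : I → ℝ) : Matrix (I ⊕ I) (I ⊕ I) ℝ :=
  Matrix.fromBlocks 0 (Matrix.diagonal lam) (Matrix.diagonal lam) 0

/-- a matrix is negative definite if its quadratic form is negative on nonzero vectors. -/
def Matrix.NegDef {I : Type*} [Fintype I] (S : Matrix I I ℝ) : Prop :=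
  ∀ x : I → ℝ, x ≠ 0 → x ⬝ᵥ S.mulVec x < 0

/-- the Euclidean norm `‖v‖₂` of a finitely indexed real vector. -/
noncomputable def norm2 {I : Type*} [Fintype I] (v : I → ℝ) : ℝ := Real.sqrt (∑ i, v i ^ 2)

/-- `σ` is sector bounded in `[a, b]`. -/
def SectorBounded (σ : ℝ → ℝ) (a b : ℝ) : Prop := ∀ s : ℝ, 0 ≤ (σ s - a * s) * (b * s - σ s)

/-- `(C, A)` is an observable pair. -/
def Observable {n p : Type*} [Fintype n] [DecidableEq n]
    (C : Matrix p n ℝ) (A : Matrix n n ℝ) : Prop :=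
  ∀ x : n → ℝ, (∀ k : ℕ, (C * A ^ k).mulVec x = 0) → x = 0

/-- a real square matrix is Hurwitz if all its complex eigenvalues have negative real part. -/
def IsHurwitz {n : ℕ} (A : Matrix (Fin n) (Fin n) ℝ) : Prop :=
  ∀ μ ∈ spectrum ℂ (A.map (Complex.ofReal)), μ.re < 0

/-- induced `∞`-norm of a matrix: maximum absolute row sum. -/
noncomputable def rowSumNorm {I J : Type*} [Fintype J] (A : Matrix I J ℝ) : ℝ :=
  ⨆ i, ∑ j, |A i j|


section LMIAuxSection
open NormedSpace Filter Matrix MeasureTheory Set Topology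

namespace LMIAux

variable {n : ℕ}




/-- mulVec commutes with tsum of matrices. -/
lemma mulVec_tsum {ι : Type*} (f : ι → Matrix (Fin n) (Fin n) ℂ) (v : Fin n → ℂ)
    (hf : Summable f) : (∑' i, f i) *ᵥ v = ∑' i, (f i) *ᵥ v := by
  letI : SeminormedRing (Matrix (Fin n) (Fin n) ℂ) := Matrix.linftyOpSemiNormedRing
  letI : NormedRing (Matrix (Fin n) (Fin n) ℂ) := Matrix.linftyOpNormedRing
  letI : NormedAlgebra ℂ (Matrix (Fin n) (Fin n) ℂ) := Matrix.linftyOpNormedAlgebra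
  let L0 : Matrix (Fin n) (Fin n) ℂ →ₗ[ℂ] (Fin n → ℂ) :=
    { toFun := fun M => M *ᵥ v
      map_add' := fun M N => Matrix.add_mulVec _ _ _
      map_smul' := fun c M => by simp [Matrix.smul_mulVec] }
  let L : Matrix (Fin n) (Fin n) ℂ →L[ℂ] (Fin n → ℂ) := L0.toContinuousLinearMap
  exact L.map_tsum hf

lemma summable_expSeries (M : Matrix (Fin n) (Fin n) ℂ) :
    Summable fun k : ℕ => ((k.factorial : ℂ))⁻¹ • M ^ k := by
  letI : SeminormedRing (Matrix (Fin n) (Fin n) ℂ) := Matrix.linftyOpSemiNormedRing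
  letI : NormedRing (Matrix (Fin n) (Fin n) ℂ) := Matrix.linftyOpNormedRing
  letI : NormedAlgebra ℂ (Matrix (Fin n) (Fin n) ℂ) := Matrix.linftyOpNormedAlgebra
  exact expSeries_summable' (𝕂 := ℂ) M

lemma exp_mulVec_of_nilpotent {M : Matrix (Fin n) (Fin n) ℂ} {v : Fin n → ℂ} {K : ℕ}
    (hK : M ^ K *ᵥ v = 0) :
    exp M *ᵥ v = ∑ k ∈ Finset.range K, ((k.factorial : ℂ))⁻¹ • (M ^ k *ᵥ v) := by
  rw [exp_eq_tsum (𝕂 := ℂ), mulVec_tsum _ _ (summable_expSeries M)]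
  have h0 : ∀ k ∉ Finset.range K, ((k.factorial : ℂ))⁻¹ • M ^ k *ᵥ v = 0 := by
    intro k hk
    have hKk : K ≤ k := by simp [Finset.mem_range] at hk; omega
    have : M ^ k *ᵥ v = 0 := by
      have : M ^ k = M ^ (k - K) * M ^ K := by
        rw [← pow_add]; congr 1; omega
      rw [this, ← Matrix.mulVec_mulVec, hK, Matrix.mulVec_zero]
    rw [this, smul_zero]
  simp only [Matrix.smul_mulVec]
  exact tsum_eq_sum h0



lemma exp_smul_one (c : ℂ) :
    exp (c • (1 : Matrix (Fin n) (Fin n) ℂ)) = Complex.exp c • 1 := by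
  letI : SeminormedRing (Matrix (Fin n) (Fin n) ℂ) := Matrix.linftyOpSemiNormedRing
  letI : NormedRing (Matrix (Fin n) (Fin n) ℂ) := Matrix.linftyOpNormedRing
  letI : NormedAlgebra ℂ (Matrix (Fin n) (Fin n) ℂ) := Matrix.linftyOpNormedAlgebra
  have hcont : Continuous (algebraMap ℂ (Matrix (Fin n) (Fin n) ℂ)) := by
    have : ⇑(algebraMap ℂ (Matrix (Fin n) (Fin n) ℂ)) = fun c => c • (1 : Matrix (Fin n) (Fin n) ℂ) := by
      funext c; exact Algebra.algebraMap_eq_smul_one c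
    rw [this]; exact continuous_id.smul continuous_const
  have := (map_exp (algebraMap ℂ (Matrix (Fin n) (Fin n) ℂ)) hcont c).symm
  rw [Algebra.algebraMap_eq_smul_one, Algebra.algebraMap_eq_smul_one] at this
  rw [← Complex.exp_eq_exp_ℂ] at this; exact this

lemma decay_on_maxGen {B : Matrix (Fin n) (Fin n) ℂ} {μ : ℂ} {ε : ℝ} (hε : 0 < ε)
    (hμ : μ.re ≤ -2 * ε) {v : Fin n → ℂ} {K : ℕ}
    (hv : (B - μ • 1) ^ K *ᵥ v = 0) :
    ∃ c : ℝ, ∀ t : ℝ, 0 ≤ t → ‖exp (t • B) *ᵥ v‖ ≤ c * Real.exp (-ε * t) := by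
  set N : Matrix (Fin n) (Fin n) ℂ := B - μ • 1 with hN
  refine ⟨∑ k ∈ Finset.range K, (ε⁻¹) ^ k * ‖N ^ k *ᵥ v‖, fun t ht => ?_⟩
  have hBsplit : t • B = t • N + ((t : ℂ) * μ) • (1 : Matrix (Fin n) (Fin n) ℂ) := by
    have h1 : ((t : ℂ) * μ) • (1 : Matrix (Fin n) (Fin n) ℂ) = t • (μ • 1) := by
      rw [← smul_assoc]
      norm_num
    rw [h1, ← smul_add, hN]
    congr 1
    abel
  have hcomm : Commute (t • N) (((t : ℂ) * μ) • (1 : Matrix (Fin n) (Fin n) ℂ)) :=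
    ((Commute.one_right N).smul_left t).smul_right _
  have hexp : exp (t • B) = exp (t • N) * (Complex.exp ((t : ℂ) * μ) • 1) := by
    rw [hBsplit, Matrix.exp_add_of_commute _ _ hcomm, exp_smul_one]
  have hnil : (t • N) ^ K *ᵥ v = 0 := by
    rw [smul_pow, Matrix.smul_mulVec, hv, smul_zero]
  have hmv : exp (t • B) *ᵥ v
      = Complex.exp ((t : ℂ) * μ) • ∑ k ∈ Finset.range K, ((k.factorial : ℂ))⁻¹ • ((t • N) ^ k *ᵥ v) := by
    rw [hexp, mul_smul_comm, mul_one, Matrix.smul_mulVec, exp_mulVec_of_nilpotent hnil]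
  rw [hmv]
  have habs : ‖Complex.exp ((t : ℂ) * μ)‖ = Real.exp (t * μ.re) := by
    rw [Complex.norm_exp]
    congr 1
    simp
  rw [norm_smul, habs]
  have hterm : ∀ k ∈ Finset.range K,
      ‖((k.factorial : ℂ))⁻¹ • ((t • N) ^ k *ᵥ v)‖
        ≤ Real.exp (ε * t) * ((ε⁻¹) ^ k * ‖N ^ k *ᵥ v‖) := by
    intro k _
    rw [smul_pow, Matrix.smul_mulVec, norm_smul, norm_smul]
    have h1 : ‖((k.factorial : ℂ))⁻¹‖ = ((k.factorial : ℝ))⁻¹ := by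
      rw [norm_inv]
      norm_num
    have h2 : ‖t ^ k‖ = t ^ k := by
      rw [Real.norm_eq_abs, abs_of_nonneg (pow_nonneg ht k)]
    rw [h1, h2]
    have hky : (ε * t) ^ k / (k.factorial : ℝ) ≤ Real.exp (ε * t) := by
      have hsum := Real.sum_le_exp_of_nonneg (x := ε * t) (by positivity) (k + 1)
      refine le_trans ?_ hsum
      exact Finset.single_le_sum (f := fun i => (ε * t) ^ i / (i.factorial : ℝ))
        (fun i _ => by positivity) (Finset.self_mem_range_succ k)
    have hkey : (k.factorial : ℝ)⁻¹ * t ^ k ≤ Real.exp (ε * t) * (ε⁻¹) ^ k := by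
      have hky' : ε ^ k * t ^ k ≤ Real.exp (ε * t) * (k.factorial : ℝ) := by
        rw [mul_pow, div_le_iff₀ (by positivity : (0:ℝ) < (k.factorial : ℝ))] at hky
        linarith
      have h4 : (k.factorial : ℝ)⁻¹ * t ^ k = t ^ k / (k.factorial : ℝ) := by ring
      have h5 : Real.exp (ε * t) * (ε⁻¹) ^ k = Real.exp (ε * t) / ε ^ k := by
        rw [inv_pow]; ring
      rw [h4, h5, div_le_div_iff₀ (by positivity) (by positivity)]
      calc t ^ k * ε ^ k = ε ^ k * t ^ k := by ring
        _ ≤ Real.exp (ε * t) * (k.factorial : ℝ) := hky'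
    calc (k.factorial : ℝ)⁻¹ * (t ^ k * ‖N ^ k *ᵥ v‖)
        = ((k.factorial : ℝ)⁻¹ * t ^ k) * ‖N ^ k *ᵥ v‖ := by ring
      _ ≤ (Real.exp (ε * t) * (ε⁻¹) ^ k) * ‖N ^ k *ᵥ v‖ := by
          exact mul_le_mul_of_nonneg_right hkey (norm_nonneg _)
      _ = Real.exp (ε * t) * ((ε⁻¹) ^ k * ‖N ^ k *ᵥ v‖) := by ring
  calc Real.exp (t * μ.re) * ‖∑ k ∈ Finset.range K, ((k.factorial : ℂ))⁻¹ • ((t • N) ^ k *ᵥ v)‖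
      ≤ Real.exp (t * μ.re) * ∑ k ∈ Finset.range K,
          Real.exp (ε * t) * ((ε⁻¹) ^ k * ‖N ^ k *ᵥ v‖) := by
        refine mul_le_mul_of_nonneg_left ?_ (Real.exp_nonneg _)
        exact le_trans (norm_sum_le _ _) (Finset.sum_le_sum hterm)
    _ = Real.exp (t * μ.re) * Real.exp (ε * t) * ∑ k ∈ Finset.range K, (ε⁻¹) ^ k * ‖N ^ k *ᵥ v‖ := by
        rw [← Finset.mul_sum]; ring
    _ ≤ Real.exp (-2 * ε * t) * Real.exp (ε * t) * ∑ k ∈ Finset.range K, (ε⁻¹) ^ k * ‖N ^ k *ᵥ v‖ := by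
        refine mul_le_mul_of_nonneg_right (mul_le_mul_of_nonneg_right ?_ (Real.exp_nonneg _)) ?_
        · exact Real.exp_le_exp.mpr (by nlinarith)
        · exact Finset.sum_nonneg fun k _ => by positivity
    _ = (∑ k ∈ Finset.range K, (ε⁻¹) ^ k * ‖N ^ k *ᵥ v‖) * Real.exp (-ε * t) := by
        rw [← Real.exp_add, show -2 * ε * t + ε * t = -ε * t by ring]; ring


variable {n : ℕ}

lemma hurwitz_exp_decay (B : Matrix (Fin n) (Fin n) ℂ)
    (hB : ∀ μ ∈ spectrum ℂ B, μ.re < 0) :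
    ∃ c ε : ℝ, 0 < ε ∧ ∀ t : ℝ, 0 ≤ t → ∀ i j, ‖exp (t • B) i j‖ ≤ c * Real.exp (-ε * t) := by
  obtain ⟨ε, hε, hsp⟩ : ∃ ε : ℝ, 0 < ε ∧ ∀ μ ∈ spectrum ℂ B, μ.re ≤ -2 * ε := by
    rcases Finset.eq_empty_or_nonempty (Matrix.finite_spectrum B).toFinset with he | hne
    · refine ⟨1, one_pos, fun μ hμ => absurd ((Matrix.finite_spectrum B).mem_toFinset.mpr hμ) ?_⟩
      simp [he]
    · refine ⟨-((Matrix.finite_spectrum B).toFinset.sup' hne (fun μ => μ.re)) / 2, ?_, ?_⟩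
      · have : (Matrix.finite_spectrum B).toFinset.sup' hne (fun μ => μ.re) < 0 := by
          rw [Finset.sup'_lt_iff]
          intro μ hμ; exact hB μ ((Matrix.finite_spectrum B).mem_toFinset.mp hμ)
        linarith
      · intro μ hμ
        have := Finset.le_sup' (fun μ : ℂ => μ.re) ((Matrix.finite_spectrum B).mem_toFinset.mpr hμ)
        linarith
  have hall : ∀ v : Fin n → ℂ, ∃ c : ℝ, ∀ t : ℝ, 0 ≤ t →
      ‖exp (t • B) *ᵥ v‖ ≤ c * Real.exp (-ε * t) := by
    let S : Submodule ℂ (Fin n → ℂ) :=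
      { carrier := {v | ∃ c : ℝ, ∀ t : ℝ, 0 ≤ t → ‖exp (t • B) *ᵥ v‖ ≤ c * Real.exp (-ε * t)}
        zero_mem' := ⟨0, fun t _ => by simp [Matrix.mulVec_zero]⟩
        add_mem' := by
          rintro v w ⟨c1, h1⟩ ⟨c2, h2⟩
          refine ⟨c1 + c2, fun t ht => ?_⟩
          rw [Matrix.mulVec_add, add_mul]
          exact le_trans (norm_add_le _ _) (add_le_add (h1 t ht) (h2 t ht))
        smul_mem' := by
          rintro a v ⟨c, h⟩
          refine ⟨‖a‖ * c, fun t ht => ?_⟩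
          rw [Matrix.mulVec_smul, norm_smul, mul_assoc]
          exact mul_le_mul_of_nonneg_left (h t ht) (norm_nonneg a) }
    intro v
    have htop : ⊤ ≤ S := by
      rw [← Module.End.iSup_maxGenEigenspace_eq_top (Matrix.toLinAlgEquiv' B)]
      refine iSup_le fun μ => fun w hw => ?_
      rcases eq_or_ne w 0 with rfl | hw0
      · exact S.zero_mem
      · obtain ⟨k, hk⟩ := (Module.End.mem_maxGenEigenspace _ _ _).mp hw
        have hk' : (B - μ • 1) ^ k *ᵥ w = 0 := by
          have heq : ((Matrix.toLinAlgEquiv' B) - μ • 1) ^ k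
              = Matrix.toLinAlgEquiv' ((B - μ • 1) ^ k) := by
            rw [map_pow, map_sub, _root_.map_smul, _root_.map_one]
          rw [heq] at hk
          rwa [Matrix.toLinAlgEquiv'_apply] at hk
        have hval : Module.End.HasUnifEigenvalue (Matrix.toLinAlgEquiv' B) μ ⊤ :=
          Submodule.ne_bot_iff _ |>.mpr ⟨w, hw, hw0⟩
        have hre : μ.re ≤ -2 * ε := by
          apply hsp
          rw [← AlgEquiv.spectrum_eq (Matrix.toLinAlgEquiv' (R := ℂ) (n := Fin n)) B]
          exact Module.End.HasUnifEigenvalue.mem_spectrum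
            (Module.End.HasUnifEigenvalue.lt zero_lt_one hval)
        exact decay_on_maxGen hε hre hk'
    exact htop Submodule.mem_top
  choose cf hcf using hall
  refine ⟨∑ j : Fin n, |cf (Pi.single j 1)|, ε, hε, fun t ht i j => ?_⟩
  have h1 : ‖exp (t • B) i j‖ ≤ ‖exp (t • B) *ᵥ Pi.single j 1‖ := by
    have h2 := norm_le_pi_norm (exp (t • B) *ᵥ Pi.single j 1) i
    rw [Matrix.mulVec_single] at h2
    simpa using h2
  refine le_trans h1 (le_trans (hcf _ t ht) ?_)
  refine mul_le_mul_of_nonneg_right ?_ (Real.exp_nonneg _)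
  exact le_trans (le_abs_self _)
    (Finset.single_le_sum (f := fun j => |cf (Pi.single j 1)|)
      (fun j _ => abs_nonneg _) (Finset.mem_univ j))


variable {n : ℕ}

lemma hurwitz_exp_decay_real (A : Matrix (Fin n) (Fin n) ℝ)
    (hA : ∀ μ ∈ spectrum ℂ (A.map Complex.ofReal), μ.re < 0) :
    ∃ c ε : ℝ, 0 < ε ∧ ∀ t : ℝ, 0 ≤ t → ∀ i j,
      |(exp (t • A)) i j| ≤ c * Real.exp (-ε * t) := by
  obtain ⟨c, ε, hε, hbound⟩ := hurwitz_exp_decay (A.map Complex.ofReal) hA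
  refine ⟨c, ε, hε, fun t ht i j => ?_⟩
  have hmap : (exp (t • A)).map Complex.ofReal = exp (t • A.map Complex.ofReal) := by
    letI : SeminormedRing (Matrix (Fin n) (Fin n) ℝ) := Matrix.linftyOpSemiNormedRing
    letI : NormedRing (Matrix (Fin n) (Fin n) ℝ) := Matrix.linftyOpNormedRing
    letI : NormedAlgebra ℝ (Matrix (Fin n) (Fin n) ℝ) := Matrix.linftyOpNormedAlgebra
    letI : NormedAlgebra ℚ (Matrix (Fin n) (Fin n) ℝ) := Matrix.linftyOpNormedAlgebra
    letI : SeminormedRing (Matrix (Fin n) (Fin n) ℂ) := Matrix.linftyOpSemiNormedRing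
    letI : NormedRing (Matrix (Fin n) (Fin n) ℂ) := Matrix.linftyOpNormedRing
    letI : NormedAlgebra ℝ (Matrix (Fin n) (Fin n) ℂ) := Matrix.linftyOpNormedAlgebra
    have hcont : Continuous (Complex.ofRealAm.mapMatrix
        (m := Fin n) : Matrix (Fin n) (Fin n) ℝ →ₐ[ℝ] Matrix (Fin n) (Fin n) ℂ) := by
      show Continuous fun M : Matrix (Fin n) (Fin n) ℝ => M.map Complex.ofReal
      exact Continuous.matrix_map continuous_id Complex.continuous_ofReal
    have h1 := map_exp (Complex.ofRealAm.mapMatrix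
        (m := Fin n) : Matrix (Fin n) (Fin n) ℝ →ₐ[ℝ] Matrix (Fin n) (Fin n) ℂ) hcont (t • A)
    have h2 : (Complex.ofRealAm.mapMatrix (t • A) : Matrix (Fin n) (Fin n) ℂ)
        = t • A.map Complex.ofReal := by
      ext i j
      simp [AlgHom.mapMatrix_apply, Complex.ofRealAm_coe]
    have h3 : ∀ M : Matrix (Fin n) (Fin n) ℝ,
        (Complex.ofRealAm.mapMatrix M : Matrix (Fin n) (Fin n) ℂ) = M.map Complex.ofReal := by
      intro M; ext i j; simp [AlgHom.mapMatrix_apply, Complex.ofRealAm_coe]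
    rw [h3, h2] at h1
    exact h1
  have : ((exp (t • A)) i j : ℂ) = exp (t • A.map Complex.ofReal) i j := by
    rw [← hmap]; rfl
  calc |(exp (t • A)) i j| = ‖((exp (t • A)) i j : ℂ)‖ := by
        rw [Complex.norm_real]; exact (Real.norm_eq_abs _).symm
    _ = ‖exp (t • A.map Complex.ofReal) i j‖ := by rw [this]
    _ ≤ c * Real.exp (-ε * t) := hbound t ht i j


variable {ns : ℕ}

noncomputable def Fmat (A : Matrix (Fin ns) (Fin ns) ℝ) (q : Fin ns → ℝ) (t : ℝ) :
    Matrix (Fin ns) (Fin ns) ℝ :=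
  exp (t • Aᵀ) * Matrix.diagonal q * exp (t • A)

lemma Fmat_def (A : Matrix (Fin ns) (Fin ns) ℝ) (q : Fin ns → ℝ) (t : ℝ) :
    Fmat A q t = exp (t • Aᵀ) * Matrix.diagonal q * exp (t • A) := rfl

lemma continuous_exp_smul (A : Matrix (Fin ns) (Fin ns) ℝ) :
    Continuous fun t : ℝ => exp (t • A) := by
  letI : SeminormedRing (Matrix (Fin ns) (Fin ns) ℝ) := Matrix.linftyOpSemiNormedRing
  letI : NormedRing (Matrix (Fin ns) (Fin ns) ℝ) := Matrix.linftyOpNormedRing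
  letI : NormedAlgebra ℝ (Matrix (Fin ns) (Fin ns) ℝ) := Matrix.linftyOpNormedAlgebra
  letI : NormedAlgebra ℚ (Matrix (Fin ns) (Fin ns) ℝ) := Matrix.linftyOpNormedAlgebra
  exact exp_continuous.comp (continuous_id.smul continuous_const)

lemma continuous_Fmat_elem (A : Matrix (Fin ns) (Fin ns) ℝ) (q : Fin ns → ℝ) (i j : Fin ns) :
    Continuous fun t : ℝ => Fmat A q t i j := by
  apply Continuous.matrix_elem
  exact ((continuous_exp_smul Aᵀ).matrix_mul continuous_const).matrix_mul (continuous_exp_smul A)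

lemma hasDerivAt_Fmat_elem (A : Matrix (Fin ns) (Fin ns) ℝ) (q : Fin ns → ℝ) (t : ℝ)
    (i j : Fin ns) :
    HasDerivAt (fun u : ℝ => Fmat A q u i j)
      ((Aᵀ * Fmat A q t + Fmat A q t * A) i j) t := by
  letI : SeminormedRing (Matrix (Fin ns) (Fin ns) ℝ) := Matrix.linftyOpSemiNormedRing
  letI : NormedRing (Matrix (Fin ns) (Fin ns) ℝ) := Matrix.linftyOpNormedRing
  letI : NormedAlgebra ℝ (Matrix (Fin ns) (Fin ns) ℝ) := Matrix.linftyOpNormedAlgebra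
  have h1 : HasDerivAt (fun u : ℝ => exp (u • Aᵀ)) (Aᵀ * exp (t • Aᵀ)) t :=
    hasDerivAt_exp_smul_const' Aᵀ t
  have h2 : HasDerivAt (fun u : ℝ => exp (u • A)) (exp (t • A) * A) t :=
    hasDerivAt_exp_smul_const A t
  have h3 := (h1.mul_const (Matrix.diagonal q)).mul h2
  have heq : Aᵀ * exp (t • Aᵀ) * Matrix.diagonal q * exp (t • A)
      + exp (t • Aᵀ) * Matrix.diagonal q * (exp (t • A) * A)
      = Aᵀ * Fmat A q t + Fmat A q t * A := by
    unfold Fmat; noncomm_ring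
  rw [heq] at h3
  have hD : HasDerivAt (fun u : ℝ => Fmat A q u) (Aᵀ * Fmat A q t + Fmat A q t * A) t := h3
  let L0 : Matrix (Fin ns) (Fin ns) ℝ →ₗ[ℝ] ℝ :=
    { toFun := fun M => M i j
      map_add' := fun _ _ => rfl
      map_smul' := fun _ _ => rfl }
  let L : Matrix (Fin ns) (Fin ns) ℝ →L[ℝ] ℝ := L0.toContinuousLinearMap
  exact L.hasFDerivAt.comp_hasDerivAt t hD


variable {ns : ℕ}

section decay
variable (A : Matrix (Fin ns) (Fin ns) ℝ) (q : Fin ns → ℝ) {c ε : ℝ}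

lemma exp_smul_transpose (t : ℝ) : exp (t • Aᵀ) = (exp (t • A))ᵀ := by
  rw [← Matrix.transpose_smul, Matrix.exp_transpose]

lemma Fmat_bound (hc : 0 ≤ c) (hε : 0 < ε)
    (hd : ∀ t : ℝ, 0 ≤ t → ∀ i j, |exp (t • A) i j| ≤ c * Real.exp (-ε * t)) :
    ∀ t : ℝ, 0 ≤ t → ∀ i j, |Fmat A q t i j|
      ≤ (c ^ 2 * ∑ l, ∑ k, |Matrix.diagonal q l k|) * Real.exp (-(2 * ε) * t) := by
  intro t ht i j
  have hd' : ∀ i j, |(exp (t • A))ᵀ i j| ≤ c * Real.exp (-ε * t) := fun i j => hd t ht j i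
  have hexpand : Fmat A q t i j
      = ∑ k, ∑ l, (exp (t • A))ᵀ i l * Matrix.diagonal q l k * exp (t • A) k j := by
    rw [Fmat_def, exp_smul_transpose]
    rw [Matrix.mul_apply]
    refine Finset.sum_congr rfl fun k _ => ?_
    rw [Matrix.mul_apply, Finset.sum_mul]
  rw [hexpand]
  calc |∑ k, ∑ l, (exp (t • A))ᵀ i l * Matrix.diagonal q l k * exp (t • A) k j|
      ≤ ∑ k, ∑ l, |(exp (t • A))ᵀ i l * Matrix.diagonal q l k * exp (t • A) k j| :=
        le_trans (Finset.abs_sum_le_sum_abs _ _)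
          (Finset.sum_le_sum fun k _ => Finset.abs_sum_le_sum_abs _ _)
    _ ≤ ∑ k, ∑ l, (c * Real.exp (-ε * t)) * |Matrix.diagonal q l k| * (c * Real.exp (-ε * t)) := by
        refine Finset.sum_le_sum fun k _ => Finset.sum_le_sum fun l _ => ?_
        rw [abs_mul, abs_mul]
        have h1 := hd' i l
        have h2 := hd t ht k j
        have hnn : (0:ℝ) ≤ c * Real.exp (-ε * t) := by positivity
        exact mul_le_mul (mul_le_mul h1 le_rfl (abs_nonneg _) hnn) h2 (abs_nonneg _)
          (by positivity)
    _ = (c ^ 2 * ∑ l, ∑ k, |Matrix.diagonal q l k|) * Real.exp (-(2 * ε) * t) := by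
        rw [Finset.sum_comm]
        simp_rw [← Finset.sum_mul, ← Finset.mul_sum]
        rw [show -(2 * ε) * t = (-ε * t) + (-ε * t) by ring, Real.exp_add]
        ring

variable {A q}

lemma Fmat_integrableOn (hc : 0 ≤ c) (hε : 0 < ε)
    (hd : ∀ t : ℝ, 0 ≤ t → ∀ i j, |exp (t • A) i j| ≤ c * Real.exp (-ε * t)) (i j : Fin ns) :
    IntegrableOn (fun t => Fmat A q t i j) (Ioi (0:ℝ)) volume := by
  set C := c ^ 2 * ∑ l, ∑ k, |Matrix.diagonal q l k| with hC
  have hCnn : 0 ≤ C := by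
    apply mul_nonneg (by positivity)
    exact Finset.sum_nonneg fun l _ => Finset.sum_nonneg fun k _ => abs_nonneg _
  have hg : IntegrableOn (fun t => C * Real.exp (-(2 * ε) * t)) (Ioi (0:ℝ)) volume :=
    (exp_neg_integrableOn_Ioi 0 (by positivity)).const_mul C
  refine Integrable.mono hg ((continuous_Fmat_elem A q i j).aestronglyMeasurable.restrict) ?_
  rw [ae_restrict_iff' measurableSet_Ioi]
  filter_upwards with t ht
  calc ‖Fmat A q t i j‖ = |Fmat A q t i j| := Real.norm_eq_abs _
    _ ≤ C * Real.exp (-(2 * ε) * t) := Fmat_bound A q hc hε hd t (le_of_lt ht) i j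
    _ ≤ ‖C * Real.exp (-(2 * ε) * t)‖ := le_abs_self _

lemma Fmat_tendsto_zero (hc : 0 ≤ c) (hε : 0 < ε)
    (hd : ∀ t : ℝ, 0 ≤ t → ∀ i j, |exp (t • A) i j| ≤ c * Real.exp (-ε * t)) (i j : Fin ns) :
    Tendsto (fun t => Fmat A q t i j) atTop (𝓝 0) := by
  set C := c ^ 2 * ∑ l, ∑ k, |Matrix.diagonal q l k| with hC
  have hb : ∀ᶠ t in (atTop : Filter ℝ), ‖Fmat A q t i j‖ ≤ C * Real.exp (-(2 * ε) * t) := by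
    filter_upwards [eventually_ge_atTop (0:ℝ)] with t ht
    rw [Real.norm_eq_abs]
    exact Fmat_bound A q hc hε hd t ht i j
  have h1 : Tendsto (fun t : ℝ => C * Real.exp (-(2 * ε) * t)) atTop (𝓝 0) := by
    have h2 : Tendsto (fun t : ℝ => Real.exp (-(2 * ε) * t)) atTop (𝓝 0) := by
      apply Real.tendsto_exp_atBot.comp
      exact Tendsto.const_mul_atTop_of_neg (by linarith : -(2*ε) < 0) tendsto_id
    simpa using h2.const_mul C
  exact squeeze_zero_norm' hb h1

lemma lyapunov_eq (hc : 0 ≤ c) (hε : 0 < ε)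
    (hd : ∀ t : ℝ, 0 ≤ t → ∀ i j, |exp (t • A) i j| ≤ c * Real.exp (-ε * t))
    (P : Matrix (Fin ns) (Fin ns) ℝ)
    (hP : ∀ i j, P i j = ∫ t in Ioi (0:ℝ), Fmat A q t i j) :
    Aᵀ * P + P * A = -(Matrix.diagonal q) := by
  have hint : ∀ i j, IntegrableOn (fun t => Fmat A q t i j) (Ioi (0:ℝ)) volume :=
    fun i j => Fmat_integrableOn hc hε hd i j
  have hGint : ∀ i j, IntegrableOn
      (fun t => (∑ k, Aᵀ i k * Fmat A q t k j) + (∑ k, Fmat A q t i k * A k j))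
      (Ioi (0:ℝ)) volume := fun i j =>
    ((integrable_finset_sum _ fun k _ => (hint k j).const_mul _).add
      (integrable_finset_sum _ fun k _ => (hint i k).mul_const _))
  have hentry : ∀ t (i j : Fin ns), (Aᵀ * Fmat A q t + Fmat A q t * A) i j
      = (∑ k, Aᵀ i k * Fmat A q t k j) + (∑ k, Fmat A q t i k * A k j) := by
    intro t i j; simp [Matrix.add_apply, Matrix.mul_apply]
  have hFTC : ∀ i j, (∫ t in Ioi (0:ℝ),
      ((∑ k, Aᵀ i k * Fmat A q t k j) + (∑ k, Fmat A q t i k * A k j)))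
      = - Matrix.diagonal q i j := by
    intro i j
    have h0 : Fmat A q 0 i j = Matrix.diagonal q i j := by
      rw [Fmat_def, zero_smul, zero_smul, exp_zero, one_mul, mul_one]
    have hderiv : ∀ x ∈ Ioi (0:ℝ), HasDerivAt (fun t => Fmat A q t i j)
        ((∑ k, Aᵀ i k * Fmat A q x k j) + (∑ k, Fmat A q x i k * A k j)) x := by
      intro x _
      have hgoal := hasDerivAt_Fmat_elem A q x i j
      rwa [hentry x i j] at hgoal
    have hih := MeasureTheory.integral_Ioi_of_hasDerivAt_of_tendsto
      (f := fun t => Fmat A q t i j)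
      (f' := fun t => (∑ k, Aᵀ i k * Fmat A q t k j) + (∑ k, Fmat A q t i k * A k j))
      ((continuous_Fmat_elem A q i j).continuousWithinAt)
      hderiv
      (hGint i j)
      (Fmat_tendsto_zero hc hε hd i j)
    rw [hih]
    show 0 - Fmat A q 0 i j = - Matrix.diagonal q i j
    rw [h0, zero_sub]
  ext i j
  have e1 : (Aᵀ * P + P * A) i j
      = (∑ k, Aᵀ i k * ∫ t in Ioi (0:ℝ), Fmat A q t k j)
        + (∑ k, (∫ t in Ioi (0:ℝ), Fmat A q t i k) * A k j) := by
    simp only [Matrix.add_apply, Matrix.mul_apply, hP]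
  rw [e1]
  have e2 : (∑ k, Aᵀ i k * ∫ t in Ioi (0:ℝ), Fmat A q t k j)
        + (∑ k, (∫ t in Ioi (0:ℝ), Fmat A q t i k) * A k j)
      = ∫ t in Ioi (0:ℝ),
          ((∑ k, Aᵀ i k * Fmat A q t k j) + (∑ k, Fmat A q t i k * A k j)) := by
    rw [integral_add (integrable_finset_sum _ fun k _ => (hint k j).const_mul _)
        (integrable_finset_sum _ fun k _ => (hint i k).mul_const _),
      integral_finset_sum _ (fun k _ => (hint k j).const_mul _),
      integral_finset_sum _ (fun k _ => (hint i k).mul_const _)]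
    simp_rw [integral_const_mul, integral_mul_const]
  rw [e2, hFTC i j, Matrix.neg_apply]
end decay


variable {ns : ℕ}

section posdef
variable {A : Matrix (Fin ns) (Fin ns) ℝ} {q : Fin ns → ℝ} {c ε : ℝ}

lemma Fmat_symm (t : ℝ) : (Fmat A q t)ᵀ = Fmat A q t := by
  rw [Fmat_def, exp_smul_transpose, Matrix.transpose_mul, Matrix.transpose_mul,
    Matrix.transpose_transpose, Matrix.diagonal_transpose, Matrix.mul_assoc]

lemma quad_eq (t : ℝ) (x : Fin ns → ℝ) :
    ∑ i, ∑ j, x i * (Fmat A q t i j * x j)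
      = ∑ k, q k * ((exp (t • A) *ᵥ x) k) ^ 2 := by
  have h1 : ∑ i, ∑ j, x i * (Fmat A q t i j * x j) = x ⬝ᵥ (Fmat A q t) *ᵥ x := by
    simp [dotProduct, Matrix.mulVec, Finset.mul_sum]
  rw [h1, Fmat_def, exp_smul_transpose]
  rw [Matrix.mul_assoc, ← Matrix.mulVec_mulVec, ← Matrix.mulVec_mulVec]
  rw [dotProduct_mulVec, Matrix.vecMul_transpose]
  simp only [dotProduct, Matrix.mulVec_diagonal]
  exact Finset.sum_congr rfl fun k _ => by ring

lemma exp_mulVec_ne_zero (t : ℝ) {x : Fin ns → ℝ} (hx : x ≠ 0) :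
    exp (t • A) *ᵥ x ≠ 0 := by
  intro h0
  apply hx
  have hmul : exp (-(t • A)) * exp (t • A) = 1 := by
    rw [← Matrix.exp_add_of_commute (-(t • A)) (t • A) (Commute.neg_left (Commute.refl _)),
      neg_add_cancel, exp_zero]
  calc x = (1 : Matrix (Fin ns) (Fin ns) ℝ) *ᵥ x := (Matrix.one_mulVec x).symm
    _ = exp (-(t • A)) *ᵥ (exp (t • A) *ᵥ x) := by rw [Matrix.mulVec_mulVec, hmul]
    _ = 0 := by rw [h0, Matrix.mulVec_zero]

lemma quad_pos_of_ne (hq : ∀ i, 0 < q i) (t : ℝ) {x : Fin ns → ℝ} (hx : x ≠ 0) :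
    0 < ∑ k, q k * ((exp (t • A) *ᵥ x) k) ^ 2 := by
  obtain ⟨k, hk⟩ := Function.ne_iff.mp (exp_mulVec_ne_zero t hx)
  refine Finset.sum_pos' (fun l _ => mul_nonneg (le_of_lt (hq l)) (sq_nonneg _)) ⟨k,
    Finset.mem_univ k, mul_pos (hq k) (pow_two_pos_of_ne_zero ?_)⟩
  simpa using hk

lemma xPx_pos (hq : ∀ i, 0 < q i) (hc : 0 ≤ c) (hε : 0 < ε)
    (hd : ∀ t : ℝ, 0 ≤ t → ∀ i j, |exp (t • A) i j| ≤ c * Real.exp (-ε * t))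
    (P : Matrix (Fin ns) (Fin ns) ℝ)
    (hP : ∀ i j, P i j = ∫ t in Ioi (0:ℝ), Fmat A q t i j)
    {x : Fin ns → ℝ} (hx : x ≠ 0) : 0 < x ⬝ᵥ P *ᵥ x := by
  have hint : ∀ i j, IntegrableOn (fun t => Fmat A q t i j) (Ioi (0:ℝ)) volume :=
    fun i j => Fmat_integrableOn hc hε hd i j
  set g : ℝ → ℝ := fun t => ∑ i, ∑ j, x i * (Fmat A q t i j * x j) with hg
  have hgint : IntegrableOn g (Ioi (0:ℝ)) volume := by
    apply integrable_finset_sum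
    intro i _
    apply integrable_finset_sum
    intro j _
    exact ((hint i j).mul_const _).const_mul _
  have hgcont : Continuous g := by
    apply continuous_finset_sum _ fun i _ => continuous_finset_sum _ fun j _ => ?_
    exact continuous_const.mul ((continuous_Fmat_elem A q i j).mul continuous_const)
  have hgpos : ∀ t, 0 < g t := fun t => by
    rw [hg]; simp only []
    rw [quad_eq]
    exact quad_pos_of_ne hq t hx
  have hxPx : x ⬝ᵥ P *ᵥ x = ∫ t in Ioi (0:ℝ), g t := by
    have h1 : x ⬝ᵥ P *ᵥ x = ∑ i, ∑ j, x i * (P i j * x j) := by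
      simp [dotProduct, Matrix.mulVec, Finset.mul_sum]
    rw [h1]
    have h2 : ∀ (i j : Fin ns), x i * (P i j * x j)
        = ∫ t in Ioi (0:ℝ), x i * (Fmat A q t i j * x j) := by
      intro i j
      rw [hP i j, integral_const_mul, integral_mul_const]
    simp_rw [h2]
    have h3 : ∀ i : Fin ns, (∑ j, ∫ t in Ioi (0:ℝ), x i * (Fmat A q t i j * x j))
        = ∫ t in Ioi (0:ℝ), ∑ j, x i * (Fmat A q t i j * x j) :=
      fun i => (integral_finset_sum _ (fun j _ => ((hint i j).mul_const _).const_mul _)).symm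
    simp_rw [h3]
    rw [← integral_finset_sum _ (fun i _ =>
      integrable_finset_sum _ fun j _ => ((hint i j).mul_const _).const_mul _)]
  rw [hxPx]
  have hmono : (∫ t in Ioc (0:ℝ) 1, g t) ≤ ∫ t in Ioi (0:ℝ), g t := by
    apply setIntegral_mono_set hgint
    · exact Filter.Eventually.of_forall fun t => (hgpos t).le
    · exact HasSubset.Subset.eventuallyLE Ioc_subset_Ioi_self
  have hpos2 : 0 < ∫ t in Ioc (0:ℝ) 1, g t := by
    rw [← intervalIntegral.integral_of_le (by norm_num : (0:ℝ) ≤ 1)]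
    apply intervalIntegral.intervalIntegral_pos_of_pos_on
    · exact hgcont.intervalIntegrable 0 1
    · exact fun u _ => hgpos u
    · norm_num
  linarith
end posdef



lemma negDef_of_dominance {I : Type*} [Fintype I] [DecidableEq I] (S : Matrix I I ℝ)
    (h : ∀ i, (∑ j, (|S i j| + |S j i|)) < -4 * S i i) :
    ∀ x : I → ℝ, x ≠ 0 → x ⬝ᵥ S *ᵥ x < 0 := by
  have hdiag : ∀ i, S i i < 0 := by
    intro i
    have h1 : |S i i| + |S i i| ≤ ∑ j, (|S i j| + |S j i|) :=
      Finset.single_le_sum (f := fun j => |S i j| + |S j i|)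
        (fun j _ => by positivity) (Finset.mem_univ i)
    have h2 := le_abs_self (S i i)
    have h3 := h i
    linarith
  intro x hx
  obtain ⟨i0, hx0⟩ := Function.ne_iff.mp hx
  have hx0 : x i0 ≠ 0 := by simpa using hx0
  set c : I → ℝ := fun i => S i i - |S i i| + (∑ j, |S i j| + ∑ j, |S j i|) / 2 with hc
  have hci : ∀ i, c i < 0 := by
    intro i
    have h1 := h i
    have h2 : |S i i| = -S i i := abs_of_neg (hdiag i)
    rw [Finset.sum_add_distrib] at h1
    rw [hc]; simp only []
    linarith
  have step1 : x ⬝ᵥ S *ᵥ x = ∑ i, ∑ j, x i * (S i j * x j) := by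
    simp [dotProduct, Matrix.mulVec, Finset.mul_sum]
  have hfg : ∀ i j, x i * (S i j * x j) ≤ |S i j| * (x i ^ 2 + x j ^ 2) / 2 := by
    intro i j
    have h1 : x i * (S i j * x j) ≤ |S i j| * |x i| * |x j| := by
      calc x i * (S i j * x j) ≤ |x i * (S i j * x j)| := le_abs_self _
        _ = |S i j| * |x i| * |x j| := by rw [abs_mul, abs_mul]; ring
    have h2 := two_mul_le_add_sq |x i| |x j|
    have h3 := sq_abs (x i)
    have h4 := sq_abs (x j)
    nlinarith [abs_nonneg (S i j), abs_nonneg (x i), abs_nonneg (x j)]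
  have step2 : ∑ i, ∑ j, x i * (S i j * x j)
      ≤ ∑ i, (S i i * x i ^ 2 - |S i i| * x i ^ 2
          + ∑ j, |S i j| * (x i ^ 2 + x j ^ 2) / 2) := by
    refine Finset.sum_le_sum fun i _ => ?_
    rw [← Finset.add_sum_erase _ (fun j => x i * (S i j * x j)) (Finset.mem_univ i),
        ← Finset.add_sum_erase _ (fun j => |S i j| * (x i ^ 2 + x j ^ 2) / 2) (Finset.mem_univ i)]
    have hgii : |S i i| * (x i ^ 2 + x i ^ 2) / 2 = |S i i| * x i ^ 2 := by ring
    have hfii : x i * (S i i * x i) = S i i * x i ^ 2 := by ring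
    have hsum : ∑ j ∈ Finset.univ.erase i, x i * (S i j * x j)
        ≤ ∑ j ∈ Finset.univ.erase i, |S i j| * (x i ^ 2 + x j ^ 2) / 2 :=
      Finset.sum_le_sum fun j _ => hfg i j
    linarith
  have step3 : ∑ i, (S i i * x i ^ 2 - |S i i| * x i ^ 2
          + ∑ j, |S i j| * (x i ^ 2 + x j ^ 2) / 2) = ∑ i, c i * x i ^ 2 := by
    have hsplit : ∀ i, (∑ j, |S i j| * (x i ^ 2 + x j ^ 2) / 2)
        = (∑ j, |S i j|) * x i ^ 2 / 2 + ∑ j, |S i j| * x j ^ 2 / 2 := by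
      intro i
      rw [Finset.sum_mul, Finset.sum_div, ← Finset.sum_add_distrib]
      exact Finset.sum_congr rfl fun j _ => by ring
    simp_rw [hsplit]
    rw [Finset.sum_add_distrib, Finset.sum_add_distrib]
    have hswap : ∑ i, ∑ j, |S i j| * x j ^ 2 / 2 = ∑ i, (∑ j, |S j i|) * x i ^ 2 / 2 := by
      rw [Finset.sum_comm]
      exact Finset.sum_congr rfl fun j _ => by rw [Finset.sum_mul, Finset.sum_div]
    rw [hswap, ← Finset.sum_add_distrib, ← Finset.sum_add_distrib]
    exact Finset.sum_congr rfl fun i _ => by rw [hc]; ring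
  have step4 : ∑ i, c i * x i ^ 2 < 0 := by
    rw [← Finset.add_sum_erase _ (fun i => c i * x i ^ 2) (Finset.mem_univ i0)]
    have h1 : c i0 * x i0 ^ 2 < 0 :=
      mul_neg_of_neg_of_pos (hci i0) (pow_two_pos_of_ne_zero hx0)
    have h2 : ∑ i ∈ Finset.univ.erase i0, c i * x i ^ 2 ≤ 0 :=
      Finset.sum_nonpos fun i _ => by
        have := mul_le_mul_of_nonneg_right (hci i).le (sq_nonneg (x i))
        simpa using this
    linarith
  rw [step1]
  exact lt_of_le_of_lt step2 (lt_of_le_of_lt (le_of_eq step3) step4)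



variable {α ι : Type*} [Fintype α] [Fintype ι] [DecidableEq α] [DecidableEq ι]

lemma bigS_eq (G P Npx : Matrix α α ℝ) (Npw : Matrix α ι ℝ) (Nxx : Matrix ι α ℝ)
    (Nxw : Matrix ι ι ℝ) (β lam : ι → ℝ) :
    (Matrix.fromBlocks (1 : Matrix α α ℝ) 0 Npx Npw)ᵀ * (Matrix.fromBlocks G P P 0)
        * (Matrix.fromBlocks (1 : Matrix α α ℝ) 0 Npx Npw)
      + (Matrix.fromBlocks Nxx Nxw (0 : Matrix ι α ℝ) (1 : Matrix ι ι ℝ))ᵀ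
        * (Psi (fun _ => (0:ℝ)) β)ᵀ * (Mmat lam)
        * (Psi (fun _ => (0:ℝ)) β)
        * (Matrix.fromBlocks Nxx Nxw (0 : Matrix ι α ℝ) (1 : Matrix ι ι ℝ))
    = Matrix.fromBlocks
        (G + Npxᵀ * P + P * Npx)
        (P * Npw + Nxxᵀ * Matrix.diagonal (fun i => lam i * β i))
        (Npwᵀ * P + Matrix.diagonal (fun i => lam i * β i) * Nxx)
        (Nxwᵀ * Matrix.diagonal (fun i => lam i * β i)
          + Matrix.diagonal (fun i => lam i * β i) * Nxw
          - (Matrix.diagonal lam + Matrix.diagonal lam)) := by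
  set R : Matrix ι ι ℝ := Matrix.diagonal (fun i => lam i * β i) with hR
  set D : Matrix ι ι ℝ := Matrix.diagonal lam with hD
  set dβ : Matrix ι ι ℝ := Matrix.diagonal β with hdβ
  have hbl : dβ * D = R := by
    rw [hdβ, hD, hR, Matrix.diagonal_mul_diagonal]
    exact congrArg Matrix.diagonal (funext fun i => mul_comm _ _)
  have hlb : D * dβ = R := by rw [hdβ, hD, hR, Matrix.diagonal_mul_diagonal]
  have hdbT : dβᵀ = dβ := by rw [hdβ]; exact Matrix.diagonal_transpose β
  have hpsi : Psi (fun _ => (0:ℝ)) β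
      = Matrix.fromBlocks dβ (-1) (0 : Matrix ι ι ℝ) (1 : Matrix ι ι ℝ) := by
    unfold Psi
    rw [hdβ]
    congr 1
    simp
  have h1 : (Matrix.fromBlocks (1 : Matrix α α ℝ) 0 Npx Npw)ᵀ * (Matrix.fromBlocks G P P 0)
      = Matrix.fromBlocks (G + Npxᵀ * P) P (Npwᵀ * P) (0 : Matrix ι α ℝ) := by
    rw [Matrix.fromBlocks_transpose, Matrix.fromBlocks_multiply]
    refine Matrix.fromBlocks_inj.mpr ⟨by simp, by simp, by simp, by simp⟩
  have h2 : Matrix.fromBlocks (G + Npxᵀ * P) P (Npwᵀ * P) (0 : Matrix ι α ℝ)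
        * Matrix.fromBlocks (1 : Matrix α α ℝ) 0 Npx Npw
      = Matrix.fromBlocks (G + Npxᵀ * P + P * Npx) (P * Npw) (Npwᵀ * P) 0 := by
    rw [Matrix.fromBlocks_multiply]
    refine Matrix.fromBlocks_inj.mpr ⟨by simp, by simp, by simp, by simp⟩
  have g1 : (Matrix.fromBlocks Nxx Nxw (0 : Matrix ι α ℝ) (1 : Matrix ι ι ℝ))ᵀ
        * (Psi (fun _ => (0:ℝ)) β)ᵀ
      = Matrix.fromBlocks (Nxxᵀ * dβ) (0 : Matrix α ι ℝ) (Nxwᵀ * dβ - 1) 1 := by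
    rw [hpsi, Matrix.fromBlocks_transpose, Matrix.fromBlocks_transpose,
      Matrix.fromBlocks_multiply]
    refine Matrix.fromBlocks_inj.mpr ⟨by simp [hdbT],
      by simp, ?_, by simp⟩
    simp [hdbT, Matrix.mul_neg, sub_eq_add_neg]
  have g2 : Matrix.fromBlocks (Nxxᵀ * dβ) (0 : Matrix α ι ℝ) (Nxwᵀ * dβ - 1) 1 * Mmat lam
      = Matrix.fromBlocks (0 : Matrix α ι ℝ) (Nxxᵀ * R) D (Nxwᵀ * R - D) := by
    unfold Mmat
    rw [Matrix.fromBlocks_multiply]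
    refine Matrix.fromBlocks_inj.mpr ⟨by simp, ?_, by simp [← hD], ?_⟩
    · rw [Matrix.mul_assoc, hbl]; simp
    · rw [Matrix.sub_mul, Matrix.mul_assoc, hbl]; simp [← hD]
  have g3 : Matrix.fromBlocks (0 : Matrix α ι ℝ) (Nxxᵀ * R) D (Nxwᵀ * R - D)
        * Psi (fun _ => (0:ℝ)) β
      = Matrix.fromBlocks (0 : Matrix α ι ℝ) (Nxxᵀ * R) R (Nxwᵀ * R - D - D) := by
    rw [hpsi, Matrix.fromBlocks_multiply]
    refine Matrix.fromBlocks_inj.mpr ⟨by simp, by simp, by simp [hlb], ?_⟩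
    simp only [Matrix.mul_neg, Matrix.mul_one]
    abel
  have g4 : Matrix.fromBlocks (0 : Matrix α ι ℝ) (Nxxᵀ * R) R (Nxwᵀ * R - D - D)
        * Matrix.fromBlocks Nxx Nxw (0 : Matrix ι α ℝ) (1 : Matrix ι ι ℝ)
      = Matrix.fromBlocks (0 : Matrix α α ℝ) (Nxxᵀ * R) (R * Nxx) (R * Nxw + (Nxwᵀ * R - D - D)) := by
    rw [Matrix.fromBlocks_multiply]
    refine Matrix.fromBlocks_inj.mpr ⟨by simp, by simp, by simp, by simp⟩
  rw [h1, h2, g1, g2, g3, g4, Matrix.fromBlocks_add]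
  refine Matrix.fromBlocks_inj.mpr ⟨by simp, by simp, ?_, ?_⟩
  · rw [add_comm]
  · abel


lemma row_le_rowSumNorm {I J : Type*} [Fintype I] [Fintype J] (M : Matrix I J ℝ) (k : I) :
    (∑ j, |M k j|) ≤ rowSumNorm M :=
  le_ciSup (f := fun i => ∑ j, |M i j|) (Set.Finite.bddAbove (Set.finite_range _)) k

end LMIAux
end LMIAuxSection

open NormedSpace in
/-- Sufficiency part of Proposition 2: with `α = 0`, `Ã = A + W^{L+2}C` Hurwitz (possible by
pole assignment when `(C,A)` is observable), `Q` diagonal positive, and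
`P = ∫₀^∞ e^{Ãᵀt} Q e^{Ãt} dt`, the diagonal-dominance conditions (i)–(ii) imply that `P` is a
symmetric positive definite solution of the LMI. -/
theorem LMI_solution_exists_of_observable
    {ns no : ℕ} (A : Matrix (Fin ns) (Fin ns) ℝ)
    (C : Matrix (Fin no) (Fin ns) ℝ)
    {σ : ℝ → ℝ} (hσ0 : σ 0 = 0)
    (net : ResNet no ns)
    (β : net.NIdx → ℝ) (hβ : ∀ i, 0 ≤ β i)
    (hsec : ∀ i : net.NIdx, SectorBounded σ 0 (β i))
    (hHurwitz : IsHurwitz (A + net.Wskip * C))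
    (q : Fin ns → ℝ) (hq : ∀ i, 0 < q i)
    (P : Matrix (Fin ns) (Fin ns) ℝ)
    (hPdef : P = Matrix.of fun i j => ∫ t in Set.Ioi (0 : ℝ),
      (exp (t • (A + net.Wskip * C)ᵀ) * Matrix.diagonal q
        * exp (t • (A + net.Wskip * C))) i j)
    (lam : net.NIdx → ℝ) (hlam : ∀ i, 0 < lam i)
    (hi : rowSumNorm (-(P * net.Npiw) - (net.Nxix C)ᵀ * Matrix.diagonal (fun i => lam i * β i))
        < ⨅ i, q i)
    (hii : rowSumNorm (-(P * net.Npiw) - (net.Nxix C)ᵀ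
          * Matrix.diagonal (fun i => lam i * β i))ᵀ
        + rowSumNorm (Matrix.diagonal (fun i => lam i * β i) * net.Nxiw
          + net.Nxiwᵀ * Matrix.diagonal (fun i => lam i * β i))
        < 2 * ⨅ i, lam i) :
    P.PosDef ∧ Matrix.NegDef
      ((net.Rpi C)ᵀ * Matrix.fromBlocks (Aᵀ * P + P * A) P P 0 * net.Rpi C
        + (net.Rxi C)ᵀ * (Psi (fun _ => (0 : ℝ)) β)ᵀ * Mmat lam
          * Psi (fun _ => (0 : ℝ)) β * net.Rxi C) := by
  classical
  obtain ⟨c0, ε, hε, hd0⟩ := LMIAux.hurwitz_exp_decay_real (A + net.Wskip * C) hHurwitz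
  set At := A + net.Wskip * C with hAt
  have hc0 : (0:ℝ) ≤ |c0| := abs_nonneg _
  have hd : ∀ t : ℝ, 0 ≤ t → ∀ i j, |(exp (t • At)) i j| ≤ |c0| * Real.exp (-ε * t) :=
    fun t ht i j => le_trans (hd0 t ht i j)
      (mul_le_mul_of_nonneg_right (le_abs_self c0) (Real.exp_nonneg _))
  have hP : ∀ i j, P i j = ∫ t in Set.Ioi (0:ℝ), LMIAux.Fmat At q t i j := by
    intro i j
    rw [hPdef]
    rfl
  have hPsymm : Pᵀ = P := by
    ext i j
    rw [Matrix.transpose_apply, hP i j, hP j i]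
    congr 1
    funext t
    rw [← Matrix.transpose_apply (LMIAux.Fmat At q t) i j,
      LMIAux.Fmat_symm (A := At) (q := q) t]
  have hlyap : Atᵀ * P + P * At = -(Matrix.diagonal q) :=
    LMIAux.lyapunov_eq hc0 hε hd P hP
  constructor
  · refine posDef_iff_dotProduct_mulVec.mpr ⟨?_, ?_⟩
    · show Pᴴ = P
      ext i j
      rw [Matrix.conjTranspose_apply, star_trivial]
      rw [← Matrix.transpose_apply P i j, hPsymm]
    · intro x hx
      have h5 := LMIAux.xPx_pos hq hc0 hε hd P hP hx
      have hsx : star x = x := funext fun i => star_trivial _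
      rw [hsx]
      exact h5
  · -- abbreviations
    have hSeq : (net.Rpi C)ᵀ * Matrix.fromBlocks (Aᵀ * P + P * A) P P 0 * net.Rpi C
        + (net.Rxi C)ᵀ * (Psi (fun _ => (0 : ℝ)) β)ᵀ * Mmat lam
          * Psi (fun _ => (0 : ℝ)) β * net.Rxi C
      = Matrix.fromBlocks (-(Matrix.diagonal q))
          (P * net.Npiw + (net.Nxix C)ᵀ * Matrix.diagonal (fun i => lam i * β i))
          (net.Npiwᵀ * P + Matrix.diagonal (fun i => lam i * β i) * net.Nxix C)
          (net.Nxiwᵀ * Matrix.diagonal (fun i => lam i * β i)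
            + Matrix.diagonal (fun i => lam i * β i) * net.Nxiw
            - (Matrix.diagonal lam + Matrix.diagonal lam)) := by
      have hrp : net.Rpi C = Matrix.fromBlocks 1 0 (net.Wskip * C) net.Npiw := rfl
      have hrx : net.Rxi C
          = Matrix.fromBlocks (net.Nxix C) net.Nxiw
              (0 : Matrix net.NIdx (Fin ns) ℝ) (1 : Matrix net.NIdx net.NIdx ℝ) := rfl
      rw [hrp, hrx, LMIAux.bigS_eq]
      refine Matrix.fromBlocks_inj.mpr ⟨?_, rfl, rfl, rfl⟩
      have hexpand : Aᵀ * P + P * A + (net.Wskip * C)ᵀ * P + P * (net.Wskip * C)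
          = Atᵀ * P + P * At := by
        rw [hAt, Matrix.transpose_add, Matrix.add_mul, Matrix.mul_add]
        abel
      rw [hexpand, hlyap]
    set R : Matrix net.NIdx net.NIdx ℝ := Matrix.diagonal (fun i => lam i * β i) with hR
    set D : Matrix net.NIdx net.NIdx ℝ := Matrix.diagonal lam with hD
    set M1 : Matrix (Fin ns) net.NIdx ℝ := -(P * net.Npiw) - (net.Nxix C)ᵀ * R with hM1
    set M2 : Matrix net.NIdx net.NIdx ℝ := R * net.Nxiw + net.Nxiwᵀ * R with hM2
    have hRT : Rᵀ = R := by rw [hR]; exact Matrix.diagonal_transpose _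
    have hDT : Dᵀ = D := by rw [hD]; exact Matrix.diagonal_transpose _
    have e12 : P * net.Npiw + (net.Nxix C)ᵀ * R = -M1 := by rw [hM1]; abel
    have e21 : net.Npiwᵀ * P + R * net.Nxix C = -(M1ᵀ) := by
      have h1 : net.Npiwᵀ * P + R * net.Nxix C = (P * net.Npiw + (net.Nxix C)ᵀ * R)ᵀ := by
        rw [Matrix.transpose_add, Matrix.transpose_mul, Matrix.transpose_mul,
          Matrix.transpose_transpose, hPsymm, hRT]
      rw [h1, e12, Matrix.transpose_neg]
    have e22 : net.Nxiwᵀ * R + R * net.Nxiw - (D + D) = M2 - (D + D) := by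
      rw [hM2]; abel
    rw [e12, e21, e22] at hSeq
    rw [hSeq]
    apply LMIAux.negDef_of_dominance
    have hM2sym : (M2 - (D + D))ᵀ = M2 - (D + D) := by
      rw [Matrix.transpose_sub, Matrix.transpose_add, Matrix.transpose_add,
        Matrix.transpose_mul, Matrix.transpose_mul, Matrix.transpose_transpose, hRT, hDT, hM2]
      abel
    intro i
    rcases i with k | k
    · -- first block row
      rw [Fintype.sum_sum_type]
      simp only [Matrix.fromBlocks_apply₁₁, Matrix.fromBlocks_apply₁₂,
        Matrix.fromBlocks_apply₂₁]
      have hq2 : (-(Matrix.diagonal q)) k k = -(q k) := by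
        simp [Matrix.diagonal_apply_eq]
      have hsum1 : (∑ j : Fin ns, (|(-(Matrix.diagonal q)) k j| + |(-(Matrix.diagonal q)) j k|))
          = 2 * q k := by
        have hterm : ∀ j : Fin ns, (|(-(Matrix.diagonal q)) k j| + |(-(Matrix.diagonal q)) j k|)
            = if j = k then 2 * q k else 0 := by
          intro j
          by_cases h : j = k
          · subst h
            simp [Matrix.diagonal_apply_eq, abs_of_nonneg (hq j).le]
            ring
          · simp [Matrix.diagonal_apply_ne q h, Matrix.diagonal_apply_ne q (Ne.symm h), h]
        rw [Finset.sum_congr rfl (fun j _ => hterm j)]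
        simp
      have hsum2 : (∑ j : net.NIdx, (|(-M1) k j| + |(-(M1ᵀ)) j k|))
          = 2 * ∑ j : net.NIdx, |M1 k j| := by
        rw [Finset.mul_sum]
        refine Finset.sum_congr rfl fun j _ => ?_
        simp only [Matrix.neg_apply, Matrix.transpose_apply, abs_neg]
        ring
      rw [hsum1, hsum2, hq2]
      have hrow := LMIAux.row_le_rowSumNorm M1 k
      have hinf : (⨅ i, q i) ≤ q k := ciInf_le (Set.Finite.bddBelow (Set.finite_range q)) k
      linarith [hi]
    · -- second block row
      rw [Fintype.sum_sum_type]
      simp only [Matrix.fromBlocks_apply₂₂, Matrix.fromBlocks_apply₁₂,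
        Matrix.fromBlocks_apply₂₁]
      have hsum1 : (∑ j : Fin ns, (|(-(M1ᵀ)) k j| + |(-M1) j k|))
          = 2 * ∑ j : Fin ns, |M1ᵀ k j| := by
        rw [Finset.mul_sum]
        refine Finset.sum_congr rfl fun j _ => ?_
        simp only [Matrix.neg_apply, Matrix.transpose_apply, abs_neg]
        ring
      have hVent : ∀ j, (M2 - (D + D)) j k = (M2 - (D + D)) k j := by
        intro j
        rw [← Matrix.transpose_apply (M2 - (D + D)) k j, hM2sym]
      have hsum2 : (∑ j : net.NIdx, (|(M2 - (D + D)) k j| + |(M2 - (D + D)) j k|))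
          = 2 * ∑ j : net.NIdx, |(M2 - (D + D)) k j| := by
        rw [Finset.mul_sum]
        refine Finset.sum_congr rfl fun j _ => ?_
        rw [hVent j]
        ring
      rw [hsum1, hsum2]
      have hdd : ∀ j, (D + D) k j = if k = j then 2 * lam k else 0 := by
        intro j
        by_cases h : k = j
        · subst h
          rw [Matrix.add_apply, hD, Matrix.diagonal_apply_eq, if_pos rfl]
          ring
        · rw [Matrix.add_apply, hD, Matrix.diagonal_apply_ne lam h, if_neg h]
          norm_num
      have hVkk : (M2 - (D + D)) k k = M2 k k - 2 * lam k := by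
        rw [Matrix.sub_apply, hdd k]
        simp
      have hVoff : ∀ j ∈ Finset.univ.erase k, |(M2 - (D + D)) k j| = |M2 k j| := by
        intro j hj
        have hkj : k ≠ j := fun h => (Finset.mem_erase.mp hj).1 h.symm
        rw [Matrix.sub_apply, hdd j, if_neg hkj, sub_zero]
      have hsplit : (∑ j : net.NIdx, |(M2 - (D + D)) k j|)
          = |M2 k k - 2 * lam k| + ∑ j ∈ Finset.univ.erase k, |M2 k j| := by
        rw [← Finset.add_sum_erase _ (fun j => |(M2 - (D + D)) k j|) (Finset.mem_univ k),
          hVkk]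
        congr 1
        exact Finset.sum_congr rfl hVoff
      have hb : (∑ j : net.NIdx, |M2 k j|)
          = |M2 k k| + ∑ j ∈ Finset.univ.erase k, |M2 k j| :=
        (Finset.add_sum_erase _ (fun j => |M2 k j|) (Finset.mem_univ k)).symm
      have hrow1 := LMIAux.row_le_rowSumNorm M1ᵀ k
      have hrow2 := LMIAux.row_le_rowSumNorm M2 k
      have hinf : (⨅ i, lam i) ≤ lam k :=
        ciInf_le (Set.Finite.bddBelow (Set.finite_range lam)) k
      have ha0 : (0:ℝ) ≤ ∑ j : Fin ns, |M1ᵀ k j| :=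
        Finset.sum_nonneg fun j _ => abs_nonneg _
      have he0 : (0:ℝ) ≤ ∑ j ∈ Finset.univ.erase k, |M2 k j| :=
        Finset.sum_nonneg fun j _ => abs_nonneg _
      have hm : M2 k k ≤ |M2 k k| := le_abs_self _
      have habs2 : |M2 k k - 2 * lam k| = 2 * lam k - M2 k k := by
        have h6 : |M2 k k| ≤ ∑ j : net.NIdx, |M2 k j| := by
          rw [hb]; linarith
        have hle : M2 k k - 2 * lam k ≤ 0 := by linarith [hii]
        rw [abs_of_nonpos hle]; ring
      rw [hsplit, habs2, hVkk]
      have h6 : |M2 k k| ≤ ∑ j : net.NIdx, |M2 k j| := by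
        rw [hb]; linarith
      linarith [hii]
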